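/- arXiv:2003.12370 — 4 statements merged into one kernel-verified Lean document; each statement's English description precedes it below -/
import Mathlib

section
/- Suppose (a_n)_{n≥2} is a sequence of nonnegative reals and 0 < s ≤ 1, satisfying a_2 ≤ s and a_n ≤ (s/(n-1))·(1 + ∑_{k=2}^{n-1} a_k) for all n ≥ 3. Then a_n ≤ (s)_{n-1}/(n-1)! for all n ≥ 2, where (s)_m = s(s+1)⋯(s+m-1) is the Pochhammer symbol. -/
/-- the recursive coefficient estimate. -/
theorem stmt_1 (s : ℝ) (hs0 : 0 < s) (hs1 : s ≤ 1) (a : ℕ → ℝ)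
    (hpos : ∀ n, 2 ≤ n → 0 ≤ a n) (h2 : a 2 ≤ s)
    (hrec : ∀ n, 3 ≤ n →
      a n ≤ s / ((n : ℝ) - 1) * (1 + ∑ k ∈ Finset.Icc 2 (n - 1), a k)) :
    ∀ n, 2 ≤ n → a n ≤ (ascPochhammer ℝ (n - 1)).eval s / (Nat.factorial (n - 1) : ℝ) := by
  -- Key claim: the partial sums are bounded by (s+1)_m / m!
  have key : ∀ m : ℕ, 1 + ∑ k ∈ Finset.Icc 2 (m + 1), a k ≤
      (ascPochhammer ℝ m).eval (s + 1) / (Nat.factorial m : ℝ) := by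
    intro m
    induction m with
    | zero => simp
    | succ m ih =>
      have hsum : ∑ k ∈ Finset.Icc 2 (m + 2), a k
          = (∑ k ∈ Finset.Icc 2 (m + 1), a k) + a (m + 2) := by
        rw [← Finset.sum_Icc_succ_top (by omega : 2 ≤ m + 2)]
      have hfac : (Nat.factorial m : ℝ) > 0 := by positivity
      have hfac1 : (Nat.factorial (m + 1) : ℝ) > 0 := by positivity
      have hev : (ascPochhammer ℝ (m + 1)).eval (s + 1)
          = (ascPochhammer ℝ m).eval (s + 1) * (s + 1 + m) :=
        ascPochhammer_succ_eval m (s + 1)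
      have hP : (0:ℝ) < (ascPochhammer ℝ m).eval (s + 1) :=
        ascPochhammer_pos m (s + 1) (by linarith)
      rcases Nat.eq_zero_or_pos m with hm | hm
      · subst hm
        rw [hsum]
        have he : ∑ k ∈ Finset.Icc 2 1, a k = 0 := by simp
        rw [he]
        norm_num [ascPochhammer_one]
        linarith
      · have h3 : 3 ≤ m + 2 := by omega
        have hr := hrec (m + 2) h3
        have hcast : ((m + 2 : ℕ) : ℝ) - 1 = (m : ℝ) + 1 := by push_cast; ring
        rw [hcast, (by omega : m + 2 - 1 = m + 1)] at hr
        have hm1 : (0:ℝ) < (m : ℝ) + 1 := by positivity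
        have hs' : 0 ≤ s / ((m : ℝ) + 1) := by positivity
        have ha : a (m + 2) ≤ s / ((m : ℝ) + 1) *
            ((ascPochhammer ℝ m).eval (s + 1) / (Nat.factorial m : ℝ)) :=
          hr.trans (by apply mul_le_mul_of_nonneg_left ih hs')
        rw [hsum]
        have hfe : (Nat.factorial (m + 1) : ℝ) = ((m : ℝ) + 1) * (Nat.factorial m : ℝ) := by
          rw [Nat.factorial_succ]; push_cast; ring
        have : 1 + ((∑ k ∈ Finset.Icc 2 (m + 1), a k) + a (m + 2))
            ≤ (ascPochhammer ℝ m).eval (s + 1) / (Nat.factorial m : ℝ)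
              + s / ((m : ℝ) + 1) * ((ascPochhammer ℝ m).eval (s + 1) / (Nat.factorial m : ℝ)) := by
          linarith
        refine this.trans (le_of_eq ?_)
        rw [hev, hfe]
        field_simp
        ring
  intro n hn
  rcases eq_or_lt_of_le hn with h | h
  · simp only [← h]
    simpa using h2
  · have h3 : 3 ≤ n := h
    have hr := hrec n h3
    have hm : n - 1 = (n - 2) + 1 := by omega
    have hcast : ((n : ℝ) - 1) = ((n - 2 : ℕ) : ℝ) + 1 := by
      have : (n : ℝ) = ((n - 2 : ℕ) : ℝ) + 2 := by
        have := Nat.cast_sub (by omega : 2 ≤ n) (R := ℝ); push_cast at this ⊢; linarith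
      linarith
    have hk := key (n - 2)
    rw [(by omega : n - 2 + 1 = n - 1)] at hk
    have hm1 : (0:ℝ) < ((n - 2 : ℕ) : ℝ) + 1 := by positivity
    have hs' : 0 ≤ s / (((n - 2 : ℕ) : ℝ) + 1) := by positivity
    have ha : a n ≤ s / (((n - 2 : ℕ) : ℝ) + 1) *
        ((ascPochhammer ℝ (n - 2)).eval (s + 1) / (Nat.factorial (n - 2) : ℝ)) := by
      rw [hcast] at hr
      exact hr.trans (mul_le_mul_of_nonneg_left hk hs')
    refine ha.trans (le_of_eq ?_)
    rw [hm, ascPochhammer_succ_left]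
    simp only [Polynomial.eval_mul, Polynomial.eval_comp, Polynomial.eval_add,
      Polynomial.eval_X, Polynomial.eval_one]
    have hfe : (Nat.factorial (n - 2 + 1) : ℝ)
        = (((n - 2 : ℕ) : ℝ) + 1) * (Nat.factorial (n - 2) : ℝ) := by
      rw [Nat.factorial_succ]; push_cast; ring
    rw [hfe]
    have hfac : (Nat.factorial (n - 2) : ℝ) > 0 := by positivity
    field_simp
end

section
/- Let h(z) = z + ∑_{n≥2} d_n z^n be analytic on the unit disk with h'(z) ≠ 0, and suppose 1 + z h''(z)/h'(z) = 1/(1-ω(z))^s where ω(z) = w_1 z + w_2 z² + ⋯ is a Schwarz function and 0 < s ≤ 1. Then d_2 = s w_1/2, d_3 = (s/6)(w_2 + ((3s+1)/2) w_1²), and d_4 = (s/12)(w_3 + ((5s+2)/2) w_1 w_2 + ((17s²+15s+4)/12) w_1³). -/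
open Metric Complex

lemma aux_ofScalars_coeff (c : ℕ → ℂ) (n : ℕ) :
    (FormalMultilinearSeries.ofScalars ℂ c).coeff n = c n := by
  show (FormalMultilinearSeries.ofScalars ℂ c n) 1 = c n
  rw [show (1 : Fin n → ℂ) = fun _ => (1:ℂ) from rfl, FormalMultilinearSeries.ofScalars_apply_eq]
  simp

lemma aux_hasFPow (c : ℕ → ℂ) (f : ℂ → ℂ)
    (hsum : ∀ z ∈ Metric.ball (0:ℂ) 1, Summable fun n => c n * z ^ n)
    (hf : ∀ z ∈ Metric.ball (0:ℂ) 1, f z = ∑' n, c n * z ^ n) :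
    HasFPowerSeriesOnBall f (FormalMultilinearSeries.ofScalars ℂ c) 0 1 := by
  constructor
  · refine ENNReal.le_of_forall_nnreal_lt fun r hr => ?_
    have hr1 : (r : ℝ) < 1 := by exact_mod_cast hr
    have hz : ((r:ℝ) : ℂ) ∈ Metric.ball (0:ℂ) 1 := by
      simp [Metric.mem_ball, _root_.abs_of_nonneg r.coe_nonneg, hr1]
    have hns : Summable fun n => ‖c n * ((r:ℝ):ℂ) ^ n‖ := summable_norm_iff.mpr (hsum _ hz)
    refine FormalMultilinearSeries.le_radius_of_summable_norm _ (hns.congr fun n => ?_)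
    simp [FormalMultilinearSeries.ofScalars_norm, norm_mul, norm_pow, aux_ofScalars_coeff,
      Complex.norm_real, _root_.abs_of_nonneg r.coe_nonneg]
  · exact one_pos
  · intro y hy
    have hy' : y ∈ Metric.ball (0:ℂ) 1 := by
      simpa [Metric.emetric_ball_nnreal, enorm_eq_nnnorm, ← NNReal.coe_lt_one] using hy
    have := (hsum y hy').hasSum
    rw [← hf y hy'] at this
    simpa [FormalMultilinearSeries.ofScalars_apply_eq, aux_ofScalars_coeff,
      smul_eq_mul, mul_comm] using this

lemma aux_iteratedDeriv (c : ℕ → ℂ) (f : ℂ → ℂ)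
    (hsum : ∀ z ∈ Metric.ball (0:ℂ) 1, Summable fun n => c n * z ^ n)
    (hf : ∀ z ∈ Metric.ball (0:ℂ) 1, f z = ∑' n, c n * z ^ n) (n : ℕ) :
    iteratedDeriv n f 0 = (n.factorial : ℂ) * c n := by
  have h := (aux_hasFPow c f hsum hf).factorial_smul (1 : ℂ) n
  rw [iteratedDeriv_eq_iteratedFDeriv, ← h]
  simp [FormalMultilinearSeries.ofScalars_apply_eq, aux_ofScalars_coeff, smul_eq_mul, mul_comm]

lemma aux_analyticOnNhd (c : ℕ → ℂ) (f : ℂ → ℂ)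
    (hsum : ∀ z ∈ Metric.ball (0:ℂ) 1, Summable fun n => c n * z ^ n)
    (hf : ∀ z ∈ Metric.ball (0:ℂ) 1, f z = ∑' n, c n * z ^ n) :
    AnalyticOnNhd ℂ f (Metric.ball (0:ℂ) 1) := by
  have := (aux_hasFPow c f hsum hf).analyticOnNhd
  intro z hz
  exact this z (by simpa [Metric.emetric_ball_nnreal, enorm_eq_nnnorm, ← NNReal.coe_lt_one] using hz)

lemma aux_deriv_congr {f g : ℂ → ℂ} (hfg : ∀ z ∈ Metric.ball (0:ℂ) 1, f z = g z)
    {z : ℂ} (hz : z ∈ Metric.ball (0:ℂ) 1) : deriv f z = deriv g z :=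
  Filter.EventuallyEq.deriv_eq (Filter.eventuallyEq_of_mem (Metric.isOpen_ball.mem_nhds hz) hfg)

lemma aux_slit {z : ℂ} (hz : ‖z‖ < 1) : 1 - z ∈ Complex.slitPlane := by
  refine Or.inl ?_
  have : z.re ≤ ‖z‖ := Complex.re_le_norm z
  simp only [Complex.sub_re, Complex.one_re]
  linarith

/-- first coefficients of a convex function associated to the hyperbola. -/
theorem stmt_4 (s : ℝ) (hs0 : 0 < s) (hs1 : s ≤ 1) (h ω : ℂ → ℂ) (d w : ℕ → ℂ)
    (hd0 : d 0 = 0) (hd1 : d 1 = 1) (hw0 : w 0 = 0)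
    (hdsum : ∀ z ∈ Metric.ball (0 : ℂ) 1, Summable fun n => d n * z ^ n)
    (hh : ∀ z ∈ Metric.ball (0 : ℂ) 1, h z = ∑' n, d n * z ^ n)
    (hd' : ∀ z ∈ Metric.ball (0 : ℂ) 1, deriv h z ≠ 0)
    (hwsum : ∀ z ∈ Metric.ball (0 : ℂ) 1, Summable fun n => w n * z ^ n)
    (hω : ∀ z ∈ Metric.ball (0 : ℂ) 1, ω z = ∑' n, w n * z ^ n)
    (hωb : ∀ z ∈ Metric.ball (0 : ℂ) 1, ‖ω z‖ < 1)
    (heq : ∀ z ∈ Metric.ball (0 : ℂ) 1,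
      deriv h z + z * deriv (deriv h) z = deriv h z * (1 - ω z) ^ (-(s : ℂ))) :
    d 2 = (s : ℂ) * w 1 / 2 ∧
    d 3 = ((s : ℂ) / 6) * (w 2 + ((3 * (s : ℂ) + 1) / 2) * w 1 ^ 2) ∧
    d 4 = ((s : ℂ) / 12) * (w 3 + ((5 * (s : ℂ) + 2) / 2) * w 1 * w 2 +
      ((17 * (s : ℂ) ^ 2 + 15 * (s : ℂ) + 4) / 12) * w 1 ^ 3) := by
  have h0B : (0:ℂ) ∈ Metric.ball (0:ℂ) 1 := by simp
  -- analyticity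
  have hhan : AnalyticOnNhd ℂ h (Metric.ball (0:ℂ) 1) := aux_analyticOnNhd d h hdsum hh
  have hωan : AnalyticOnNhd ℂ ω (Metric.ball (0:ℂ) 1) := aux_analyticOnNhd w ω hwsum hω
  set h1 := deriv h with h1def
  set h2 := deriv h1 with h2def
  set h3 := deriv h2 with h3def
  set h4 := deriv h3 with h4def
  set h5 := deriv h4 with h5def
  set ω1 := deriv ω with ω1def
  set ω2 := deriv ω1 with ω2def
  set ω3 := deriv ω2 with ω3def
  set G : ℂ → ℂ := fun z => (1 - ω z) ^ (-(s:ℂ)) with Gdef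
  set G1 := deriv G with G1def
  set G2 := deriv G1 with G2def
  have hh1an : AnalyticOnNhd ℂ h1 (Metric.ball (0:ℂ) 1) := hhan.deriv
  have hh2an : AnalyticOnNhd ℂ h2 (Metric.ball (0:ℂ) 1) := hh1an.deriv
  have hh3an : AnalyticOnNhd ℂ h3 (Metric.ball (0:ℂ) 1) := hh2an.deriv
  have hh4an : AnalyticOnNhd ℂ h4 (Metric.ball (0:ℂ) 1) := hh3an.deriv
  have hω1an : AnalyticOnNhd ℂ ω1 (Metric.ball (0:ℂ) 1) := hωan.deriv
  have hω2an : AnalyticOnNhd ℂ ω2 (Metric.ball (0:ℂ) 1) := hω1an.deriv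
  have hslit : ∀ z ∈ Metric.ball (0:ℂ) 1, (1 - ω z) ∈ Complex.slitPlane :=
    fun z hz => aux_slit (hωb z hz)
  have hGan : AnalyticOnNhd ℂ G (Metric.ball (0:ℂ) 1) := by
    intro z hz
    exact AnalyticAt.cpow (analyticAt_const.sub (hωan z hz)) analyticAt_const (hslit z hz)
  have hG1an : AnalyticOnNhd ℂ G1 (Metric.ball (0:ℂ) 1) := hGan.deriv
  have hG2an : AnalyticOnNhd ℂ G2 (Metric.ball (0:ℂ) 1) := hG1an.deriv
  -- pointwise derivative facts
  have hωd : ∀ z ∈ Metric.ball (0:ℂ) 1, HasDerivAt ω (ω1 z) z :=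
    fun z hz => (hωan z hz).differentiableAt.hasDerivAt
  have hω1d : ∀ z ∈ Metric.ball (0:ℂ) 1, HasDerivAt ω1 (ω2 z) z :=
    fun z hz => (hω1an z hz).differentiableAt.hasDerivAt
  have hω2d : ∀ z ∈ Metric.ball (0:ℂ) 1, HasDerivAt ω2 (ω3 z) z :=
    fun z hz => (hω2an z hz).differentiableAt.hasDerivAt
  have hh1d : ∀ z ∈ Metric.ball (0:ℂ) 1, HasDerivAt h1 (h2 z) z :=
    fun z hz => (hh1an z hz).differentiableAt.hasDerivAt
  have hh2d : ∀ z ∈ Metric.ball (0:ℂ) 1, HasDerivAt h2 (h3 z) z :=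
    fun z hz => (hh2an z hz).differentiableAt.hasDerivAt
  have hh3d : ∀ z ∈ Metric.ball (0:ℂ) 1, HasDerivAt h3 (h4 z) z :=
    fun z hz => (hh3an z hz).differentiableAt.hasDerivAt
  have hh4d : ∀ z ∈ Metric.ball (0:ℂ) 1, HasDerivAt h4 (h5 z) z :=
    fun z hz => (hh4an z hz).differentiableAt.hasDerivAt
  have hGd : ∀ z ∈ Metric.ball (0:ℂ) 1, HasDerivAt G (G1 z) z :=
    fun z hz => (hGan z hz).differentiableAt.hasDerivAt
  have hG1d : ∀ z ∈ Metric.ball (0:ℂ) 1, HasDerivAt G1 (G2 z) z :=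
    fun z hz => (hG1an z hz).differentiableAt.hasDerivAt
  have hG2d : ∀ z ∈ Metric.ball (0:ℂ) 1, HasDerivAt G2 (deriv G2 z) z :=
    fun z hz => (hG2an z hz).differentiableAt.hasDerivAt
  have hbase : ∀ z ∈ Metric.ball (0:ℂ) 1, HasDerivAt (fun y => 1 - ω y) (0 - ω1 z) z :=
    fun z hz => (hasDerivAt_const z 1).sub (hωd z hz)
  -- formula for G1 on the ball
  have hP1 : ∀ z ∈ Metric.ball (0:ℂ) 1,
      G1 z = (s:ℂ) * ω1 z * (1 - ω z) ^ (-(s:ℂ) - 1) := by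
    intro z hz
    have hc : HasDerivAt (fun y => (1 - ω y) ^ (-(s:ℂ)))
        ((-(s:ℂ)) * (1 - ω z) ^ (-(s:ℂ) - 1) * (0 - ω1 z)) z :=
      HasDerivAt.cpow_const (hbase z hz) (hslit z hz)
    have : G1 z = (-(s:ℂ)) * (1 - ω z) ^ (-(s:ℂ) - 1) * (0 - ω1 z) := hc.deriv
    rw [this]; ring
  -- formula for G2 on the ball
  have hP2 : ∀ z ∈ Metric.ball (0:ℂ) 1,
      G2 z = (s:ℂ) * ω2 z * (1 - ω z) ^ (-(s:ℂ) - 1)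
        + (s:ℂ) * ((s:ℂ) + 1) * ω1 z ^ 2 * (1 - ω z) ^ (-(s:ℂ) - 2) := by
    intro z hz
    have hstep : G2 z = deriv (fun y => (s:ℂ) * ω1 y * (1 - ω y) ^ (-(s:ℂ) - 1)) z :=
      aux_deriv_congr hP1 hz
    have hc : HasDerivAt (fun y => (1 - ω y) ^ (-(s:ℂ) - 1))
        ((-(s:ℂ) - 1) * (1 - ω z) ^ (-(s:ℂ) - 1 - 1) * (0 - ω1 z)) z :=
      HasDerivAt.cpow_const (hbase z hz) (hslit z hz)
    have hd : HasDerivAt (fun y => (s:ℂ) * ω1 y * (1 - ω y) ^ (-(s:ℂ) - 1))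
        ((0 * ω1 z + (s:ℂ) * ω2 z) * (1 - ω z) ^ (-(s:ℂ) - 1)
          + ((s:ℂ) * ω1 z) * ((-(s:ℂ) - 1) * (1 - ω z) ^ (-(s:ℂ) - 1 - 1) * (0 - ω1 z))) z :=
      ((hasDerivAt_const z ((s:ℂ))).mul (hω1d z hz)).mul hc
    rw [hstep, hd.deriv, show (-(s:ℂ) - 1 - 1) = -(s:ℂ) - 2 by ring]
    ring
  -- values at 0
  have habs0 : ω 0 = 0 := by
    rw [hω 0 h0B, tsum_eq_single 0 (by intro n hn; simp [zero_pow hn])]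
    simp [hw0]
  have hω10 : ω1 0 = w 1 := by
    have := aux_iteratedDeriv w ω hwsum hω 1
    rw [iteratedDeriv_one] at this
    simpa using this
  have hω20 : ω2 0 = 2 * w 2 := by
    have := aux_iteratedDeriv w ω hwsum hω 2
    rw [iteratedDeriv_succ, iteratedDeriv_one] at this
    rw [ω2def, ω1def]
    simpa [Nat.factorial] using this
  have hω30 : ω3 0 = 6 * w 3 := by
    have := aux_iteratedDeriv w ω hwsum hω 3
    rw [iteratedDeriv_succ, iteratedDeriv_succ, iteratedDeriv_one] at this
    rw [ω3def, ω2def, ω1def]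
    simpa [Nat.factorial] using this
  have hh10 : h1 0 = 1 := by
    have := aux_iteratedDeriv d h hdsum hh 1
    rw [iteratedDeriv_one] at this
    simpa [hd1] using this
  have hh20 : h2 0 = 2 * d 2 := by
    have := aux_iteratedDeriv d h hdsum hh 2
    rw [iteratedDeriv_succ, iteratedDeriv_one] at this
    rw [h2def, h1def]
    simpa [Nat.factorial] using this
  have hh30 : h3 0 = 6 * d 3 := by
    have := aux_iteratedDeriv d h hdsum hh 3
    rw [iteratedDeriv_succ, iteratedDeriv_succ, iteratedDeriv_one] at this
    rw [h3def, h2def, h1def]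
    simpa [Nat.factorial] using this
  have hh40 : h4 0 = 24 * d 4 := by
    have := aux_iteratedDeriv d h hdsum hh 4
    rw [iteratedDeriv_succ, iteratedDeriv_succ, iteratedDeriv_succ, iteratedDeriv_one] at this
    rw [h4def, h3def, h2def, h1def]
    simpa [Nat.factorial] using this
  have hG0 : G 0 = 1 := by
    rw [Gdef]
    simp [habs0, Complex.one_cpow]
  have hG10 : G1 0 = (s:ℂ) * w 1 := by
    rw [hP1 0 h0B, habs0, hω10]
    simp [Complex.one_cpow]
  have hG20 : G2 0 = 2 * (s:ℂ) * w 2 + (s:ℂ) * ((s:ℂ) + 1) * w 1 ^ 2 := by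
    rw [hP2 0 h0B, habs0, hω10, hω20]
    simp [Complex.one_cpow]
    ring
  have hG30 : deriv G2 0 = 6 * (s:ℂ) * w 3 + 6 * (s:ℂ) * ((s:ℂ) + 1) * w 1 * w 2
      + (s:ℂ) * ((s:ℂ) + 1) * ((s:ℂ) + 2) * w 1 ^ 3 := by
    have hstep : deriv G2 0 = deriv (fun y => (s:ℂ) * ω2 y * (1 - ω y) ^ (-(s:ℂ) - 1)
        + (s:ℂ) * ((s:ℂ) + 1) * ω1 y ^ 2 * (1 - ω y) ^ (-(s:ℂ) - 2)) 0 :=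
      aux_deriv_congr hP2 h0B
    have hc1 : HasDerivAt (fun y => (1 - ω y) ^ (-(s:ℂ) - 1))
        ((-(s:ℂ) - 1) * (1 - ω 0) ^ (-(s:ℂ) - 1 - 1) * (0 - ω1 0)) 0 :=
      HasDerivAt.cpow_const (hbase 0 h0B) (hslit 0 h0B)
    have hc2 : HasDerivAt (fun y => (1 - ω y) ^ (-(s:ℂ) - 2))
        ((-(s:ℂ) - 2) * (1 - ω 0) ^ (-(s:ℂ) - 2 - 1) * (0 - ω1 0)) 0 :=
      HasDerivAt.cpow_const (hbase 0 h0B) (hslit 0 h0B)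
    have ht1 : HasDerivAt (fun y => (s:ℂ) * ω2 y * (1 - ω y) ^ (-(s:ℂ) - 1))
        ((0 * ω2 0 + (s:ℂ) * ω3 0) * (1 - ω 0) ^ (-(s:ℂ) - 1)
          + ((s:ℂ) * ω2 0) * ((-(s:ℂ) - 1) * (1 - ω 0) ^ (-(s:ℂ) - 1 - 1) * (0 - ω1 0))) 0 :=
      ((hasDerivAt_const 0 ((s:ℂ))).mul (hω2d 0 h0B)).mul hc1
    have hpow : HasDerivAt (fun y => ω1 y ^ 2) ((2:ℕ) * ω1 0 ^ 1 * ω2 0) 0 :=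
      (hω1d 0 h0B).pow 2
    have ht2 : HasDerivAt (fun y => (s:ℂ) * ((s:ℂ) + 1) * ω1 y ^ 2 * (1 - ω y) ^ (-(s:ℂ) - 2))
        ((0 * ω1 0 ^ 2 + ((s:ℂ) * ((s:ℂ) + 1)) * ((2:ℕ) * ω1 0 ^ 1 * ω2 0)) * (1 - ω 0) ^ (-(s:ℂ) - 2)
          + ((s:ℂ) * ((s:ℂ) + 1) * ω1 0 ^ 2)
            * ((-(s:ℂ) - 2) * (1 - ω 0) ^ (-(s:ℂ) - 2 - 1) * (0 - ω1 0))) 0 :=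
      ((hasDerivAt_const 0 ((s:ℂ) * ((s:ℂ) + 1))).mul hpow).mul hc2
    have := (ht1.add ht2).deriv
    simp only [Pi.add_def] at this
    rw [hstep, this, habs0, hω10, hω20, hω30]
    simp [Complex.one_cpow]
    ring
  -- main functional equations
  have heq' : ∀ z ∈ Metric.ball (0:ℂ) 1, h1 z + z * h2 z = h1 z * G z := fun z hz => heq z hz
  have hE1 : ∀ z ∈ Metric.ball (0:ℂ) 1,
      2 * h2 z + z * h3 z = h2 z * G z + h1 z * G1 z := by
    intro z hz
    have hstep : deriv (fun y => h1 y + y * h2 y) z = deriv (fun y => h1 y * G y) z :=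
      aux_deriv_congr heq' hz
    have hL : HasDerivAt (fun y => h1 y + y * h2 y)
        (h2 z + (1 * h2 z + z * h3 z)) z :=
      (hh1d z hz).add ((hasDerivAt_id z).mul (hh2d z hz))
    have hR : HasDerivAt (fun y => h1 y * G y) (h2 z * G z + h1 z * G1 z) z :=
      (hh1d z hz).mul (hGd z hz)
    have := hL.deriv.symm.trans (hstep.trans hR.deriv)
    linear_combination this
  have hE2 : ∀ z ∈ Metric.ball (0:ℂ) 1,
      3 * h3 z + z * h4 z = h3 z * G z + 2 * (h2 z * G1 z) + h1 z * G2 z := by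
    intro z hz
    have hstep : deriv (fun y => 2 * h2 y + y * h3 y) z
        = deriv (fun y => h2 y * G y + h1 y * G1 y) z := aux_deriv_congr hE1 hz
    have hL : HasDerivAt (fun y => 2 * h2 y + y * h3 y)
        ((0 * h2 z + 2 * h3 z) + (1 * h3 z + z * h4 z)) z :=
      ((hasDerivAt_const z 2).mul (hh2d z hz)).add ((hasDerivAt_id z).mul (hh3d z hz))
    have hR : HasDerivAt (fun y => h2 y * G y + h1 y * G1 y)
        ((h3 z * G z + h2 z * G1 z) + (h2 z * G1 z + h1 z * G2 z)) z :=
      ((hh2d z hz).mul (hGd z hz)).add ((hh1d z hz).mul (hG1d z hz))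
    have := hL.deriv.symm.trans (hstep.trans hR.deriv)
    linear_combination this
  have hE3 : 4 * h4 0 = h4 0 * G 0 + 3 * (h3 0 * G1 0) + 3 * (h2 0 * G2 0)
      + h1 0 * deriv G2 0 := by
    have hstep : deriv (fun y => 3 * h3 y + y * h4 y) 0
        = deriv (fun y => h3 y * G y + 2 * (h2 y * G1 y) + h1 y * G2 y) 0 :=
      aux_deriv_congr hE2 h0B
    have hL : HasDerivAt (fun y => 3 * h3 y + y * h4 y)
        ((0 * h3 0 + 3 * h4 0) + (1 * h4 0 + 0 * h5 0)) 0 :=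
      ((hasDerivAt_const 0 3).mul (hh3d 0 h0B)).add ((hasDerivAt_id 0).mul (hh4d 0 h0B))
    have hR : HasDerivAt (fun y => h3 y * G y + 2 * (h2 y * G1 y) + h1 y * G2 y)
        (((h4 0 * G 0 + h3 0 * G1 0) + (0 * (h2 0 * G1 0) + 2 * (h3 0 * G1 0 + h2 0 * G2 0)))
          + (h2 0 * G2 0 + h1 0 * deriv G2 0)) 0 :=
      (((hh3d 0 h0B).mul (hGd 0 h0B)).add
        ((hasDerivAt_const 0 2).mul (((hh2d 0 h0B).mul (hG1d 0 h0B))))).add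
        ((hh1d 0 h0B).mul (hG2d 0 h0B))
    have := hL.deriv.symm.trans (hstep.trans hR.deriv)
    linear_combination this
  -- now extract the numeric relations
  have q1 := hE1 0 h0B
  rw [hh10, hh20, hh30, hG0, hG10] at q1
  have q2 := hE2 0 h0B
  rw [hh10, hh20, hh30, hh40, hG0, hG10, hG20] at q2
  have q3 := hE3
  rw [hh10, hh20, hh30, hh40, hG0, hG10, hG20, hG30] at q3
  have e2 : d 2 = (s : ℂ) * w 1 / 2 := by linear_combination q1 / 2
  have e3 : d 3 = ((s : ℂ) / 6) * (w 2 + ((3 * (s : ℂ) + 1) / 2) * w 1 ^ 2) := by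
    rw [e2] at q2
    linear_combination q2 / 12
  have e4 : d 4 = ((s : ℂ) / 12) * (w 3 + ((5 * (s : ℂ) + 2) / 2) * w 1 * w 2 +
      ((17 * (s : ℂ) ^ 2 + 15 * (s : ℂ) + 4) / 12) * w 1 ^ 3) := by
    rw [e2, e3] at q3
    linear_combination q3 / 72
  exact ⟨e2, e3, e4⟩
end

section
/- Let g(z) = ∑_{n≥1} B_n z^n be analytic and convex univalent on the unit disk, and let h(z) = ∑_{n≥1} A_n z^n be analytic on the unit disk with h subordinate to g (i.e., h = g ∘ ω for some analytic ω : 𝔻 → 𝔻 with ω(0) = 0). Then |A_n| ≤ |B_1| for every n ≥ 1. -/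
open Metric Set Filter Complex
open scoped Topology


noncomputable def rogFps (C : ℕ → ℂ) : FormalMultilinearSeries ℂ ℂ ℂ :=
  fun m => ContinuousMultilinearMap.mkPiRing ℂ (Fin m) (C m)

lemma rog_bound {C : ℕ → ℂ} (hs : ∀ z ∈ Metric.ball (0:ℂ) 1, Summable fun m => C m * z ^ m)
    {r : ℝ} (hr0 : 0 ≤ r) (hr : r < 1) : ∃ M : ℝ, ∀ m, ‖C m‖ * r ^ m ≤ M := by
  have hz : (r : ℂ) ∈ Metric.ball (0:ℂ) 1 := by
    simpa [Complex.norm_real, _root_.abs_of_nonneg hr0] using hr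
  have h1 := (hs _ hz).tendsto_atTop_zero.norm
  have h2 : BddAbove (Set.range fun m => ‖C m * (r:ℂ) ^ m‖) := h1.bddAbove_range
  obtain ⟨M, hM⟩ := h2
  refine ⟨M, fun m => ?_⟩
  have := hM (Set.mem_range_self m)
  simpa [norm_mul, norm_pow, Complex.norm_real, _root_.abs_of_nonneg hr0] using this

lemma rog_hasFPowerSeries {C : ℕ → ℂ} {f : ℂ → ℂ}
    (hs : ∀ z ∈ Metric.ball (0:ℂ) 1, Summable fun m => C m * z ^ m)
    (hf : ∀ z ∈ Metric.ball (0:ℂ) 1, f z = ∑' m, C m * z ^ m) :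
    HasFPowerSeriesOnBall f (rogFps C) 0 1 := by
  constructor
  · refine ENNReal.le_of_forall_nnreal_lt fun r hr => ?_
    have hr1 : (r : ℝ) < 1 := by exact_mod_cast hr
    obtain ⟨M, hM⟩ := rog_bound hs r.coe_nonneg hr1
    exact (rogFps C).le_radius_of_bound M fun m => by
      simpa [rogFps, ContinuousMultilinearMap.norm_mkPiRing] using hM m
  · exact one_pos
  · intro y hy
    have hy' : ‖y‖ < 1 := by
      have := EMetric.mem_ball.1 hy
      rw [edist_zero_right, enorm_eq_nnnorm] at this
      exact_mod_cast this
    have hyb : y ∈ Metric.ball (0:ℂ) 1 := by simpa [Metric.mem_ball, dist_zero_right] using hy'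
    have : (fun m => (rogFps C) m fun _ => y) = fun m => C m * y ^ m := by
      funext m
      simp [rogFps, ContinuousMultilinearMap.mkPiRing_apply, smul_eq_mul, mul_comm]
    rw [zero_add, this, hf y hyb]
    exact (hs y hyb).hasSum

lemma rog_deriv {C : ℕ → ℂ} {f : ℂ → ℂ}
    (hs : ∀ z ∈ Metric.ball (0:ℂ) 1, Summable fun m => C m * z ^ m)
    (hf : ∀ z ∈ Metric.ball (0:ℂ) 1, f z = ∑' m, C m * z ^ m) :
    deriv f 0 = C 1 := by
  have := (rog_hasFPowerSeries hs hf).hasFPowerSeriesAt.deriv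
  rw [this]
  simp [rogFps, FormalMultilinearSeries.coeff, ContinuousMultilinearMap.mkPiRing_apply]

lemma rog_diffOn {C : ℕ → ℂ} {f : ℂ → ℂ}
    (hs : ∀ z ∈ Metric.ball (0:ℂ) 1, Summable fun m => C m * z ^ m)
    (hf : ∀ z ∈ Metric.ball (0:ℂ) 1, f z = ∑' m, C m * z ^ m) :
    DifferentiableOn ℂ f (Metric.ball (0:ℂ) 1) := by
  have := (rog_hasFPowerSeries hs hf).differentiableOn
  refine this.mono fun x hx => ?_
  have hx1 : ‖x‖ < 1 := by simpa [Metric.mem_ball, dist_zero_right] using hx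
  rw [EMetric.mem_ball, edist_zero_right, enorm_eq_nnnorm]
  exact_mod_cast hx1

lemma rog_strictDeriv {f : ℂ → ℂ} {z : ℂ} (hf : AnalyticAt ℂ f z) :
    HasStrictDerivAt f (deriv f z) z := by
  obtain ⟨p, hp⟩ := hf
  have := hp.hasStrictDerivAt
  rwa [← hp.deriv] at this

lemma rog_deriv_ne_zero {g : ℂ → ℂ} {U : Set ℂ} (hU : IsOpen U)
    (hg : AnalyticOnNhd ℂ g U) (hinj : Set.InjOn g U) {ζ : ℂ} (hζ : ζ ∈ U) :
    deriv g ζ ≠ 0 := by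
  intro hd0
  set f : ℂ → ℂ := fun z => g z - g ζ with hfdef
  have hfa : AnalyticAt ℂ f ζ := (hg ζ hζ).sub analyticAt_const
  -- f is not eventually zero
  have hne : ¬ ∀ᶠ z in 𝓝 ζ, f z = 0 := by
    intro hev
    have h1 : ∀ᶠ z in 𝓝[≠] ζ, f z = 0 ∧ z ∈ U :=
      ((hev.and (hU.eventually_mem hζ)).filter_mono nhdsWithin_le_nhds)
    have h2 : ∀ᶠ z in 𝓝[≠] ζ, z ≠ ζ := eventually_mem_nhdsWithin.mono fun z hz => hz
    obtain ⟨z, ⟨hz0, hzU⟩, hzne⟩ := (h1.and h2).exists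
    exact hzne (hinj hzU hζ (by simpa [hfdef, sub_eq_zero] using hz0))
  obtain ⟨m, u, hua, hu0, hueq⟩ := hfa.exists_eventuallyEq_pow_smul_nonzero_iff.mpr hne
  -- m ≥ 2
  have hf0 : f ζ = 0 := by simp [hfdef]
  have hm0 : m ≠ 0 := by
    intro h
    apply hu0
    have := hueq.self_of_nhds
    rw [hf0, h] at this
    simpa using this.symm
  have hfd : deriv f ζ = 0 := by
    have : deriv f ζ = deriv g ζ := by
      simp only [hfdef]
      exact deriv_sub_const _
    rw [this, hd0]
  have hm1 : m ≠ 1 := by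
    intro h
    subst h
    have hd : deriv f ζ = u ζ := by
      rw [Filter.EventuallyEq.deriv_eq hueq]
      have hu' : HasDerivAt (fun z => (z - ζ) ^ 1 • u z) ((1 - 0) * u ζ + (ζ - ζ) ^ 1 * deriv u ζ) ζ := by
        simpa using (((hasDerivAt_id ζ).sub_const ζ).fun_mul hua.differentiableAt.hasDerivAt)
      simpa using hu'.deriv
    rw [hfd] at hd
    exact hu0 hd.symm
  have hm2 : 2 ≤ m := by omega
  -- m-th root of u near ζ
  obtain ⟨c, hc⟩ := IsAlgClosed.exists_pow_nat_eq (u ζ) (by omega : 0 < m)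
  have hcne : c ≠ 0 := fun h => hu0 (by simp [← hc, h, zero_pow hm0])
  set v : ℂ → ℂ := fun z => c * Complex.exp ((m : ℂ)⁻¹ * Complex.log (u z / u ζ)) with hvdef
  have hva : AnalyticAt ℂ v ζ := by
    apply analyticAt_const.mul
    apply analyticAt_cexp.comp
    apply analyticAt_const.mul
    apply (hua.div analyticAt_const hu0).clog
    simp [div_self hu0, Complex.mem_slitPlane_iff]
  have hvζ : v ζ = c := by simp [hvdef, div_self hu0]
  have hupow : ∀ᶠ z in 𝓝 ζ, v z ^ m = u z := by
    have : ∀ᶠ z in 𝓝 ζ, u z ≠ 0 := hua.continuousAt.eventually_ne hu0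
    filter_upwards [this] with z hz
    have hne' : u z / u ζ ≠ 0 := div_ne_zero hz hu0
    calc v z ^ m = c ^ m * Complex.exp ((m : ℂ) * ((m : ℂ)⁻¹ * Complex.log (u z / u ζ))) := by
          rw [hvdef, mul_pow, ← Complex.exp_nat_mul]
      _ = u ζ * (u z / u ζ) := by
          rw [hc, ← mul_assoc, mul_inv_cancel₀ (by exact_mod_cast hm0), one_mul,
            Complex.exp_log hne']
      _ = u z := by field_simp
  set k : ℂ → ℂ := fun z => (z - ζ) * v z with hkdef
  have hka : AnalyticAt ℂ k ζ := (analyticAt_id.sub analyticAt_const).mul hva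
  have hkζ : k ζ = 0 := by simp [hkdef]
  have hkd : HasDerivAt k c ζ := by
    have := (((hasDerivAt_id ζ).sub_const ζ).fun_mul hva.differentiableAt.hasDerivAt)
    simpa [hvζ] using this
  have hks : HasStrictDerivAt k c ζ := by
    have := rog_strictDeriv hka
    rwa [hkd.deriv] at this
  have hfk : ∀ᶠ z in 𝓝 ζ, f z = k z ^ m := by
    filter_upwards [hueq, hupow] with z h1 h2
    rw [h1, hkdef]
    simp only [smul_eq_mul, mul_pow]
    rw [h2]
  -- local inverse of k
  set G := hks.hasStrictFDerivAt_equiv hcne with hGdef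
  set L : ℂ → ℂ := G.localInverse k _ ζ with hLdef
  have hLcont : ContinuousAt L 0 := by
    have := G.localInverse_continuousAt
    rwa [hkζ] at this
  have hL0 : L 0 = ζ := by
    have := G.localInverse_apply_image
    rwa [hkζ] at this
  have hRinv : ∀ᶠ y in 𝓝 (0 : ℂ) , k (L y) = y := by
    have := G.eventually_right_inverse
    rwa [hkζ] at this
  have hLtendsto : Tendsto L (𝓝 0) (𝓝 ζ) := by
    have := hLcont.tendsto
    rwa [hL0] at this
  have hGood : ∀ᶠ y in 𝓝 (0 : ℂ), k (L y) = y ∧ L y ∈ U ∧ f (L y) = k (L y) ^ m := by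
    filter_upwards [hRinv, hLtendsto.eventually (hU.eventually_mem hζ),
      hLtendsto.eventually hfk] with y h1 h2 h3
    exact ⟨h1, h2, h3⟩
  -- primitive root
  set ρ : ℂ := Complex.exp (2 * Real.pi * Complex.I / m) with hρdef
  have hρprim : IsPrimitiveRoot ρ m := Complex.isPrimitiveRoot_exp m hm0
  have hρm : ρ ^ m = 1 := hρprim.pow_eq_one
  have hρ1 : ρ ≠ 1 := by
    intro h
    have h2 : m ∣ 1 := hρprim.dvd_of_pow_eq_one 1 (by simp [h])
    have := Nat.dvd_one.mp h2
    omega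
  have hmul : Tendsto (fun s : ℂ => s * ρ) (𝓝 0) (𝓝 0) := by
    have := (continuous_mul_right ρ).tendsto (0 : ℂ)
    simpa using this
  have hboth : ∀ᶠ s in 𝓝[≠] (0:ℂ), ((k (L s) = s ∧ L s ∈ U ∧ f (L s) = k (L s) ^ m) ∧
      (k (L (s * ρ)) = s * ρ ∧ L (s * ρ) ∈ U ∧ f (L (s * ρ)) = k (L (s * ρ)) ^ m)) ∧ s ∈ ({0}ᶜ : Set ℂ) := by
    have h1 := ((hGood.and (hmul.eventually hGood)).filter_mono
      (nhdsWithin_le_nhds : 𝓝[≠] (0:ℂ) ≤ 𝓝 0))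
    exact h1.and (eventually_mem_nhdsWithin.mono fun z hz => hz)
  obtain ⟨s, ⟨⟨hk1, hU1, hf1⟩, ⟨hk2, hU2, hf2⟩⟩, hs0'⟩ := hboth.exists
  have hs0 : s ≠ 0 := hs0'
  have e1 : g (L s) - g ζ = s ^ m := by
    have : f (L s) = s ^ m := by rw [hf1, hk1]
    simpa [hfdef] using this
  have e2 : g (L (s * ρ)) - g ζ = s ^ m := by
    have : f (L (s * ρ)) = s ^ m := by rw [hf2, hk2, mul_pow, hρm, mul_one]
    simpa [hfdef] using this
  have hgeq : g (L s) = g (L (s * ρ)) := by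
    have := e1.trans e2.symm
    exact sub_left_inj.mp this
  have hLeq : L s = L (s * ρ) := hinj hU1 hU2 hgeq
  have : s = s * ρ := by rw [← hk2, ← hLeq, hk1]
  have hρeq : ρ = 1 := by
    have := mul_left_cancel₀ hs0 (by simpa using this.symm : s * ρ = s * 1)
    exact this
  exact hρ1 hρeq

lemma rog_bound' {C : ℕ → ℂ} (hs : ∀ z ∈ Metric.ball (0:ℂ) 1, Summable fun m => C m * z ^ m)
    {r : ℝ} (hr0 : 0 ≤ r) (hr : r < 1) : ∃ M : ℝ, ∀ m, ‖C m‖ * r ^ m ≤ M := by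
  have hz : (r : ℂ) ∈ Metric.ball (0:ℂ) 1 := by
    simpa [Complex.norm_real, _root_.abs_of_nonneg hr0] using hr
  have h1 := (hs _ hz).tendsto_atTop_zero.norm
  obtain ⟨M, hM⟩ := h1.bddAbove_range
  refine ⟨M, fun m => ?_⟩
  have := hM (Set.mem_range_self m)
  simpa [norm_mul, norm_pow, Complex.norm_real, _root_.abs_of_nonneg hr0] using this

lemma rog_sub_summable {C : ℕ → ℂ}
    (hs : ∀ z ∈ Metric.ball (0:ℂ) 1, Summable fun m => C m * z ^ m)
    {n : ℕ} (hn : 1 ≤ n) {z : ℂ} (hz : z ∈ Metric.ball (0:ℂ) 1) :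
    Summable fun m => C (n * m) * z ^ m := by
  have hzn : ‖z‖ < 1 := by simpa [Metric.mem_ball, dist_zero_right] using hz
  set t : ℝ := ‖z‖ with htdef
  have ht0 : 0 ≤ t := norm_nonneg z
  set s : ℝ := t ^ ((n : ℝ)⁻¹) with hsdef
  have hs0 : 0 ≤ s := Real.rpow_nonneg ht0 _
  have hsn : s ^ n = t := Real.rpow_inv_natCast_pow ht0 (by omega)
  have hs1 : s < 1 := by
    rcases eq_or_lt_of_le ht0 with h | h
    · rw [hsdef, ← h, Real.zero_rpow (by positivity)]; norm_num
    · calc s < 1 ^ ((n:ℝ)⁻¹) := Real.rpow_lt_rpow ht0 hzn (by positivity)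
        _ = 1 := Real.one_rpow _
  set σ : ℝ := (1 + s) / 2 with hσdef
  have hσs : s < σ := by rw [hσdef]; linarith
  have hσ0 : 0 < σ := by rw [hσdef]; linarith
  have hσ1 : σ < 1 := by rw [hσdef]; linarith
  obtain ⟨M, hM⟩ := rog_bound' hs (le_of_lt hσ0) hσ1
  have hM0 : 0 ≤ M := le_trans (by positivity) (hM 0)
  set r : ℝ := (s / σ) ^ n with hrdef
  have hr0 : 0 ≤ r := by positivity
  have hr1 : r < 1 := pow_lt_one₀ (by positivity) (by rw [div_lt_one hσ0]; exact hσs) (by omega)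
  apply Summable.of_norm_bounded (g := fun m => M * r ^ m)
    ((summable_geometric_of_lt_one hr0 hr1).mul_left M)
  intro m
  have key : ‖C (n * m) * z ^ m‖ = ‖C (n * m)‖ * σ ^ (n * m) * (s / σ) ^ (n * m) := by
    rw [norm_mul, norm_pow, ← htdef, ← hsn, ← pow_mul, mul_assoc, ← mul_pow]
    rw [mul_div_cancel₀ _ (ne_of_gt hσ0)]
  rw [key]
  calc ‖C (n * m)‖ * σ ^ (n * m) * (s / σ) ^ (n * m)
      ≤ M * (s / σ) ^ (n * m) := by
        apply mul_le_mul_of_nonneg_right (hM _) (by positivity)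
    _ = M * r ^ m := by rw [hrdef, ← pow_mul]

lemma rog_rootsum {n : ℕ} {ε : ℂ} (hprim : IsPrimitiveRoot ε n) (m : ℕ) :
    ∑ k ∈ Finset.range n, (ε ^ m) ^ k = if n ∣ m then (n : ℂ) else 0 := by
  by_cases hdvd : n ∣ m
  · rw [if_pos hdvd, (hprim.pow_eq_one_iff_dvd m).mpr hdvd]
    simp
  · rw [if_neg hdvd]
    have hx1 : ε ^ m ≠ 1 := fun hh => hdvd ((hprim.pow_eq_one_iff_dvd m).mp hh)
    rw [geom_sum_eq hx1]
    have : (ε ^ m) ^ n = 1 := by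
      rw [← pow_mul, mul_comm, pow_mul, hprim.pow_eq_one, one_pow]
    rw [this]
    simp
lemma rog_average {A : ℕ → ℂ} {h : ℂ → ℂ}
    (hAsum : ∀ z ∈ Metric.ball (0:ℂ) 1, Summable fun m => A m * z ^ m)
    (hhA : ∀ z ∈ Metric.ball (0:ℂ) 1, h z = ∑' m, A m * z ^ m)
    {n : ℕ} (hn : 1 ≤ n) {ε : ℂ} (hprim : IsPrimitiveRoot ε n)
    {w : ℂ} (hwk : ∀ k : ℕ, ε ^ k * w ∈ Metric.ball (0:ℂ) 1) :
    (∑' m, A (n * m) * (w ^ n) ^ m) = (n:ℂ)⁻¹ * ∑ k ∈ Finset.range n, h (ε ^ k * w) := by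
  have hn0 : (n : ℂ) ≠ 0 := by exact_mod_cast (by omega : n ≠ 0)
  have hstep : ∀ k ∈ Finset.range n, h (ε ^ k * w) = ∑' m, A m * (ε ^ k * w) ^ m :=
    fun k _ => hhA _ (hwk k)
  rw [Finset.sum_congr rfl hstep, ← Summable.tsum_finsetSum (fun k _ => hAsum _ (hwk k)), ← tsum_mul_left]
  have hinner : ∀ m, (n:ℂ)⁻¹ * ∑ k ∈ Finset.range n, A m * (ε ^ k * w) ^ m
      = if n ∣ m then A m * w ^ m else 0 := by
    intro m
    have he : ∀ k, A m * (ε ^ k * w) ^ m = (A m * w ^ m) * (ε ^ m) ^ k := by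
      intro k
      rw [mul_pow, ← pow_mul, mul_comm k m, pow_mul]
      ring
    simp_rw [he]
    rw [← Finset.mul_sum, rog_rootsum hprim m]
    by_cases hd : n ∣ m
    · rw [if_pos hd, if_pos hd]
      field_simp
    · simp [hd]
  rw [tsum_congr hinner]
  symm
  have hi : Function.Injective (fun j : ℕ => n * j) := fun a b hab => by
    simp only at hab
    exact Nat.eq_of_mul_eq_mul_left (by omega) hab
  have hsupp : Function.support (fun m => if n ∣ m then A m * w ^ m else 0)
      ⊆ Set.range (fun j : ℕ => n * j) := by
    intro m hm
    by_cases hd : n ∣ m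
    · obtain ⟨j, rfl⟩ := hd
      exact ⟨j, rfl⟩
    · simp [hd] at hm
  have := hi.tsum_eq hsupp
  rw [← this]
  apply tsum_congr
  intro j
  rw [if_pos (Dvd.intro j rfl), pow_mul]

/-- Rogosinski's theorem. -/
theorem stmt_6 (g h ω : ℂ → ℂ) (A B : ℕ → ℂ)
    (hg : AnalyticOnNhd ℂ g (Metric.ball (0 : ℂ) 1))
    (hginj : Set.InjOn g (Metric.ball (0 : ℂ) 1))
    (hgconv : Convex ℝ (g '' Metric.ball (0 : ℂ) 1))
    (hB0 : B 0 = 0)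
    (hBsum : ∀ z ∈ Metric.ball (0 : ℂ) 1, Summable fun n => B n * z ^ n)
    (hgB : ∀ z ∈ Metric.ball (0 : ℂ) 1, g z = ∑' n, B n * z ^ n)
    (hA0 : A 0 = 0)
    (hAsum : ∀ z ∈ Metric.ball (0 : ℂ) 1, Summable fun n => A n * z ^ n)
    (hhA : ∀ z ∈ Metric.ball (0 : ℂ) 1, h z = ∑' n, A n * z ^ n)
    (hω : AnalyticOnNhd ℂ ω (Metric.ball (0 : ℂ) 1)) (hω0 : ω 0 = 0)
    (hωb : ∀ z ∈ Metric.ball (0 : ℂ) 1, ‖ω z‖ < 1)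
    (hsub : ∀ z ∈ Metric.ball (0 : ℂ) 1, h z = g (ω z)) :
    ∀ n, 1 ≤ n → ‖A n‖ ≤ ‖B 1‖ := by
  intro n hn
  have hball : (0:ℂ) ∈ Metric.ball (0:ℂ) 1 := by simp
  have hg0 : g 0 = 0 := by
    rw [hgB 0 hball, tsum_eq_single 0 (fun m hm => by simp [zero_pow hm])]
    simp [hB0]
  set ε : ℂ := Complex.exp (2 * Real.pi * Complex.I / n) with hεdef
  have hprim : IsPrimitiveRoot ε n := Complex.isPrimitiveRoot_exp n (by omega)
  have hεnorm : ‖ε‖ = 1 := Complex.norm_eq_one_of_pow_eq_one hprim.pow_eq_one (by omega)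
  set Cq : ℕ → ℂ := fun m => A (n * m) with hCq
  set q : ℂ → ℂ := fun z => ∑' m, Cq m * z ^ m with hqdef
  have hqsum : ∀ z ∈ Metric.ball (0:ℂ) 1, Summable fun m => Cq m * z ^ m :=
    fun z hz => rog_sub_summable hAsum hn hz
  have hqq : ∀ z ∈ Metric.ball (0:ℂ) 1, q z = ∑' m, Cq m * z ^ m := fun z _ => rfl
  have hqderiv : deriv q 0 = A n := by
    have := rog_deriv hqsum hqq
    simpa [hCq] using this
  have hgderiv : deriv g 0 = B 1 := rog_deriv hBsum hgB
  have hqdiff : DifferentiableOn ℂ q (Metric.ball (0:ℂ) 1) := rog_diffOn hqsum hqq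
  have hq0 : q 0 = 0 := by
    rw [hqdef]
    simp only
    rw [tsum_eq_single 0 (fun m hm => by simp [zero_pow hm])]
    simp [hCq, hA0]
  have hmapsq : ∀ z ∈ Metric.ball (0:ℂ) 1, q z ∈ g '' Metric.ball (0:ℂ) 1 := by
    intro z hz
    obtain ⟨w, hw⟩ := IsAlgClosed.exists_pow_nat_eq z (by omega : 0 < n)
    have hzn : ‖z‖ < 1 := by simpa [Metric.mem_ball, dist_zero_right] using hz
    have hwn : ‖w‖ < 1 := by
      have h1 : ‖w‖ ^ n < 1 := by rw [← norm_pow, hw]; exact hzn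
      exact (pow_lt_one_iff_of_nonneg (norm_nonneg w) (by omega)).mp h1
    have hwk : ∀ k : ℕ, ε ^ k * w ∈ Metric.ball (0:ℂ) 1 := by
      intro k
      simpa [Metric.mem_ball, dist_zero_right, norm_mul, norm_pow, hεnorm] using hwn
    have havg := rog_average hAsum hhA hn hprim hwk
    have hqz : q z = (n:ℂ)⁻¹ * ∑ k ∈ Finset.range n, h (ε ^ k * w) := by
      rw [hqdef]
      simp only [hCq]
      rw [← hw]
      exact havg
    rw [hqz]
    have hmem : ∀ k ∈ Finset.range n, h (ε ^ k * w) ∈ g '' Metric.ball (0:ℂ) 1 := by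
      intro k _
      rw [hsub _ (hwk k)]
      exact ⟨ω (ε ^ k * w), by simpa [Metric.mem_ball, dist_zero_right] using hωb _ (hwk k), rfl⟩
    have hcs := hgconv.sum_mem (t := Finset.range n) (w := fun _ => (n:ℝ)⁻¹)
      (fun _ _ => by positivity)
      (by
        rw [Finset.sum_const, Finset.card_range, nsmul_eq_mul]
        field_simp)
      hmem
    convert hcs using 1
    rw [Finset.mul_sum]
    apply Finset.sum_congr rfl
    intro k _
    rw [Complex.real_smul]
    push_cast
    ring
  set ψ : ℂ → ℂ := fun z => Function.invFunOn g (Metric.ball (0:ℂ) 1) (q z) with hψdef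
  have hψmem : ∀ z ∈ Metric.ball (0:ℂ) 1, ψ z ∈ Metric.ball (0:ℂ) 1 ∧ g (ψ z) = q z := by
    intro z hz
    obtain ⟨x, hx, hgx⟩ := hmapsq z hz
    have hex : ∃ a ∈ Metric.ball (0:ℂ) 1, g a = q z := ⟨x, hx, hgx⟩
    exact ⟨Function.invFunOn_mem hex, Function.invFunOn_eq hex⟩
  have hψ0 : ψ 0 = 0 := by
    apply hginj (hψmem 0 hball).1 hball
    rw [(hψmem 0 hball).2, hq0, hg0]
  have hψdiff : DifferentiableOn ℂ ψ (Metric.ball (0:ℂ) 1) := by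
    intro z₀ hz₀
    have hζb : ψ z₀ ∈ Metric.ball (0:ℂ) 1 := (hψmem z₀ hz₀).1
    have hgζ : g (ψ z₀) = q z₀ := (hψmem z₀ hz₀).2
    have hdnz : deriv g (ψ z₀) ≠ 0 := rog_deriv_ne_zero Metric.isOpen_ball hg hginj hζb
    have hstr : HasStrictDerivAt g (deriv g (ψ z₀)) (ψ z₀) := rog_strictDeriv (hg _ hζb)
    set G := hstr.hasStrictFDerivAt_equiv hdnz with hGdef
    set L : ℂ → ℂ := G.localInverse g _ (ψ z₀) with hLdef
    have hL1 : L (g (ψ z₀)) = ψ z₀ := G.localInverse_apply_image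
    have hLc : ContinuousAt L (g (ψ z₀)) := G.localInverse_continuousAt
    have hLd : DifferentiableAt ℂ L (g (ψ z₀)) := G.to_localInverse.differentiableAt
    have hqd : DifferentiableAt ℂ q z₀ :=
      hqdiff.differentiableAt (Metric.isOpen_ball.mem_nhds hz₀)
    have hqt : Tendsto q (𝓝 z₀) (𝓝 (g (ψ z₀))) := by
      rw [hgζ]
      exact hqd.continuousAt
    have hLt : Tendsto (fun z => L (q z)) (𝓝 z₀) (𝓝 (ψ z₀)) := by
      have h1 := hLc.tendsto
      rw [hL1] at h1
      exact h1.comp hqt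
    have hev : ψ =ᶠ[𝓝 z₀] fun z => L (q z) := by
      filter_upwards [Metric.isOpen_ball.eventually_mem hz₀,
        hqt.eventually G.eventually_right_inverse,
        hLt.eventually (Metric.isOpen_ball.eventually_mem hζb)] with z hzball hrinv hLball
      apply hginj (hψmem z hzball).1 hLball
      rw [(hψmem z hzball).2]
      exact hrinv.symm
    have hdiffc : DifferentiableAt ℂ (fun z => L (q z)) z₀ := by
      rw [hgζ] at hLd
      exact hLd.comp z₀ hqd
    exact (hev.differentiableAt_iff.mpr hdiffc).differentiableWithinAt
  have hmapsψ : Set.MapsTo ψ (Metric.ball (0:ℂ) 1) (Metric.ball (0:ℂ) 1) :=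
    fun z hz => (hψmem z hz).1
  have hschwarz : ‖deriv ψ 0‖ ≤ 1 :=
    Complex.norm_deriv_le_one_of_mapsTo_ball hψdiff
      (by rw [hψ0]; exact hmapsψ.mono_right Metric.ball_subset_closedBall) one_pos
  have hcomp : q =ᶠ[𝓝 0] fun z => g (ψ z) := by
    filter_upwards [Metric.isOpen_ball.eventually_mem hball] with z hz
    exact ((hψmem z hz).2).symm
  have hψd0 : DifferentiableAt ℂ ψ 0 :=
    hψdiff.differentiableAt (Metric.isOpen_ball.mem_nhds hball)
  have hgd0 : DifferentiableAt ℂ g (ψ 0) := by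
    rw [hψ0]
    exact (hg 0 hball).differentiableAt
  have hchain : deriv q 0 = deriv g (ψ 0) * deriv ψ 0 := by
    rw [Filter.EventuallyEq.deriv_eq hcomp]
    exact deriv_comp 0 hgd0 hψd0
  rw [hqderiv, hψ0, hgderiv] at hchain
  calc ‖A n‖ = ‖B 1‖ * ‖deriv ψ 0‖ := by rw [hchain, norm_mul]
    _ ≤ ‖B 1‖ * 1 := by
        apply mul_le_mul_of_nonneg_left _ (norm_nonneg _)
        exact hschwarz
    _ = ‖B 1‖ := mul_one _
end

section
/- Let 0 < s ≤ 1, f ∈ ST_hpl(s) with f(z) = z + a₂z² + a₃z³ + ⋯, and λ ∈ ℝ. Then |a₃ − λa₂²| ≤ s²(λ − (3s+1)/(4s)) if λ ≥ (3s+3)/(4s); |a₃ − λa₂²| ≤ s/2 if (3s−1)/(4s) ≤ λ ≤ (3s+3)/(4s); and |a₃ − λa₂²| ≤ −s²(λ − (3s+1)/(4s)) if λ ≤ (3s−1)/(4s). -/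
open Metric Set Filter Complex

private lemma mobius_norm_ineq {a b : ℂ} (ha : ‖a‖ ≤ 1) (hb : ‖b‖ < 1) :
    ‖a - b‖ ≤ ‖1 - (starRingEnd ℂ) b * a‖ := by
  have h1 : Complex.normSq (a - b) ≤ Complex.normSq (1 - (starRingEnd ℂ) b * a) := by
    have key : Complex.normSq (1 - (starRingEnd ℂ) b * a) - Complex.normSq (a - b)
        = (1 - Complex.normSq a) * (1 - Complex.normSq b) := by
      simp only [Complex.normSq_apply, Complex.sub_re, Complex.sub_im, Complex.mul_re,
        Complex.mul_im, Complex.one_re, Complex.one_im, Complex.conj_re, Complex.conj_im]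
      ring
    have hna : Complex.normSq a ≤ 1 := by
      have := Complex.sq_norm a
      nlinarith [ha, norm_nonneg a]
    have hnb : Complex.normSq b ≤ 1 := by
      have := Complex.sq_norm b
      nlinarith [le_of_lt hb, norm_nonneg b]
    nlinarith
  have := Real.sqrt_le_sqrt h1
  simpa [Complex.norm_def] using this

private lemma schwarz_coeffs (ω : ℂ → ℂ) (w : ℕ → ℂ) (hw0 : w 0 = 0)
    (hsum : ∀ z ∈ Metric.ball (0 : ℂ) 1, Summable fun n => w n * z ^ n)
    (hrep : ∀ z ∈ Metric.ball (0 : ℂ) 1, ω z = ∑' n, w n * z ^ n)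
    (hb : ∀ z ∈ Metric.ball (0 : ℂ) 1, ‖ω z‖ < 1) :
    ‖w 1‖ ≤ 1 ∧ ‖w 2‖ ≤ 1 - ‖w 1‖ ^ 2 := by
  set q : FormalMultilinearSeries ℂ ℂ ℂ :=
    FormalMultilinearSeries.ofScalars ℂ (fun n => w (n + 1)) with hq
  -- radius of q is at least 1
  have hrad : 1 ≤ q.radius := by
    refine ENNReal.le_of_forall_nnreal_lt (fun r hr => ?_)
    rw [ENNReal.coe_lt_one_iff] at hr
    set r' : ℝ := ((r : ℝ) + 1) / 2 with hr'def
    have hrr' : (r : ℝ) < r' := by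
      have := r.coe_nonneg
      rw [hr'def]; nlinarith [(NNReal.coe_lt_one.mpr hr)]
    have hr'0 : 0 < r' := lt_of_le_of_lt r.coe_nonneg hrr'
    have hr'1 : r' < 1 := by
      rw [hr'def]; nlinarith [(NNReal.coe_lt_one.mpr hr)]
    have hz : ((r' : ℂ)) ∈ Metric.ball (0 : ℂ) 1 := by
      simp [Complex.norm_real, abs_of_pos hr'0, hr'1]
    have hS := hsum _ hz
    have htend : Tendsto (fun n => ‖w n * (r' : ℂ) ^ n‖) atTop (nhds 0) := by
      simpa using hS.tendsto_atTop_zero.norm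
    obtain ⟨C, hC⟩ := htend.bddAbove_range
    have hCb : ∀ n, ‖w n‖ * r' ^ n ≤ C := by
      intro n
      have : ‖w n * (r' : ℂ) ^ n‖ ≤ C := hC ⟨n, rfl⟩
      simpa [norm_mul, norm_pow, Complex.norm_real, abs_of_pos hr'0] using this
    apply q.le_radius_of_bound (C / r')
    intro n
    have hqn : ‖q n‖ = ‖w (n + 1)‖ := by
      rw [hq]; exact FormalMultilinearSeries.ofScalars_norm _ _ _
    rw [hqn]
    have h1 : ‖w (n + 1)‖ * (r : ℝ) ^ n ≤ ‖w (n + 1)‖ * r' ^ n := by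
      apply mul_le_mul_of_nonneg_left _ (norm_nonneg _)
      exact pow_le_pow_left₀ r.coe_nonneg hrr'.le n
    have h2 : ‖w (n + 1)‖ * r' ^ n = (‖w (n + 1)‖ * r' ^ (n + 1)) / r' := by
      field_simp [pow_succ]; ring
    have h3 : (‖w (n + 1)‖ * r' ^ (n + 1)) / r' ≤ C / r' := by
      gcongr
      exact hCb (n + 1)
    calc ‖w (n + 1)‖ * (r : ℝ) ^ n ≤ ‖w (n + 1)‖ * r' ^ n := h1
      _ = (‖w (n + 1)‖ * r' ^ (n + 1)) / r' := h2
      _ ≤ C / r' := h3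
  -- the function g = ω z / z, given by the shifted power series
  set g : ℂ → ℂ := q.sum with hgdef
  have hg : HasFPowerSeriesOnBall g q 0 1 :=
    (q.hasFPowerSeriesOnBall (lt_of_lt_of_le zero_lt_one hrad)).mono zero_lt_one hrad
  have hgd : DifferentiableOn ℂ g (Metric.ball (0 : ℂ) 1) := by
    have := hg.differentiableOn
    rwa [show (1 : ENNReal) = ((1 : NNReal) : ENNReal) by simp,
      Metric.emetric_ball_nnreal] at this
  have hsum_eq : ∀ z : ℂ, g z = ∑' n, w (n + 1) * z ^ n := by
    intro z
    rw [hgdef, FormalMultilinearSeries.sum]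
    refine tsum_congr fun n => ?_
    rw [hq, FormalMultilinearSeries.ofScalars_apply_eq, smul_eq_mul]
  have homega : ∀ z ∈ Metric.ball (0 : ℂ) 1, ω z = z * g z := by
    intro z hz
    rw [hrep z hz, (hsum z hz).tsum_eq_zero_add, hw0, hsum_eq]
    have : ∀ n : ℕ, w (n + 1) * z ^ (n + 1) = z * (w (n + 1) * z ^ n) := by
      intro n; ring
    rw [tsum_congr this, tsum_mul_left]
    simp
  have hg0 : g 0 = w 1 := by
    rw [hsum_eq]
    rw [tsum_eq_single 0 (by intro n hn; simp [zero_pow hn])]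
    simp
  have hgderiv : HasDerivAt g (w 2) 0 := by
    have h1 := hg.hasFPowerSeriesAt.deriv
    have hdiff : DifferentiableAt ℂ g 0 :=
      (hgd.differentiableAt (Metric.isOpen_ball.mem_nhds (by simp)))
    have h3 := hdiff.hasDerivAt
    rw [h1] at h3
    have h2 : ((q 1) fun _ => (1 : ℂ)) = w 2 := by
      simp [hq, FormalMultilinearSeries.ofScalars]
    rwa [h2] at h3
  -- the bound ‖g z‖ ≤ 1 on the unit ball, via the maximum principle
  have hgb : ∀ z ∈ Metric.ball (0 : ℂ) 1, ‖g z‖ ≤ 1 := by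
    intro z hz
    have hzn : ‖z‖ < 1 := by simpa using hz
    have key : ∀ r : ℝ, ‖z‖ < r → r < 1 → ‖g z‖ ≤ 1 / r := by
      intro r hr1 hr2
      have hr0 : 0 < r := lt_of_le_of_lt (norm_nonneg z) hr1
      have hUb : Bornology.IsBounded (Metric.ball (0 : ℂ) r) := Metric.isBounded_ball
      have hdc : DiffContOnCl ℂ g (Metric.ball (0 : ℂ) r) := by
        apply DifferentiableOn.diffContOnCl
        rw [closure_ball (0 : ℂ) hr0.ne']
        exact hgd.mono (fun x hx => by
          simp only [Metric.mem_closedBall, dist_zero_right] at hx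
          simp only [Metric.mem_ball, dist_zero_right]
          linarith)
      have hfr : ∀ x ∈ frontier (Metric.ball (0 : ℂ) r), ‖g x‖ ≤ 1 / r := by
        intro x hx
        rw [frontier_ball (0 : ℂ) hr0.ne'] at hx
        have hxn : ‖x‖ = r := by simpa using hx
        have hx0 : x ≠ 0 := by intro h; rw [h] at hxn; simp at hxn; linarith
        have hxball : x ∈ Metric.ball (0 : ℂ) 1 := by simp [hxn]; exact hr2
        have h1 : ‖ω x‖ = r * ‖g x‖ := by rw [homega x hxball, norm_mul, hxn]
        have h2 : r * ‖g x‖ < 1 := h1 ▸ hb x hxball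
        rw [le_div_iff₀ hr0]
        nlinarith
      have hcl : z ∈ closure (Metric.ball (0 : ℂ) r) := by
        rw [closure_ball (0 : ℂ) hr0.ne']
        simpa using hr1.le
      exact Complex.norm_le_of_forall_mem_frontier_norm_le hUb hdc hfr hcl
    by_contra hcon
    push_neg at hcon
    have hg0' : 0 < ‖g z‖ := lt_trans one_pos hcon
    set r : ℝ := max ((‖z‖ + 1) / 2) ((1 / ‖g z‖ + 1) / 2) with hrdef
    have hinv : 1 / ‖g z‖ < 1 := by
      rw [div_lt_one hg0']; exact hcon
    have hr1 : ‖z‖ < r := lt_of_lt_of_le (by linarith) (le_max_left _ _)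
    have hr2 : r < 1 := by
      apply max_lt <;> linarith
    have hr3 : 1 / ‖g z‖ < r := lt_of_lt_of_le (by linarith) (le_max_right _ _)
    have := key r hr1 hr2
    have hr0 : 0 < r := lt_of_le_of_lt (norm_nonneg z) hr1
    rw [div_lt_iff₀ hg0'] at hr3
    rw [le_div_iff₀ hr0] at this
    nlinarith
  have h0ball : (0 : ℂ) ∈ Metric.ball (0 : ℂ) 1 := by simp
  have hw1 : ‖w 1‖ ≤ 1 := hg0 ▸ hgb 0 h0ball
  refine ⟨hw1, ?_⟩
  by_cases hone : ‖w 1‖ < 1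
  · -- Möbius transform argument
    set b := w 1 with hbdef
    set h : ℂ → ℂ := fun z => (g z - b) / (1 - (starRingEnd ℂ) b * g z) with hhdef
    have hdenom : ∀ z ∈ Metric.ball (0 : ℂ) 1, 1 - (starRingEnd ℂ) b * g z ≠ 0 := by
      intro z hz heq
      have h1 : ‖(starRingEnd ℂ) b * g z‖ < 1 := by
        rw [norm_mul, RCLike.norm_conj]
        calc ‖b‖ * ‖g z‖ ≤ ‖b‖ * 1 := by
              exact mul_le_mul_of_nonneg_left (hgb z hz) (norm_nonneg b)
          _ < 1 := by rw [mul_one]; exact hone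
      have : (1 : ℂ) = (starRingEnd ℂ) b * g z := by linear_combination heq
      rw [← this] at h1; simp at h1
    have hhd : DifferentiableOn ℂ h (Metric.ball (0 : ℂ) 1) := by
      apply DifferentiableOn.div
      · exact hgd.sub (differentiableOn_const b)
      · exact (differentiableOn_const 1).sub ((differentiableOn_const _).mul hgd)
      · exact hdenom
    have hh0 : h 0 = 0 := by
      rw [hhdef]; simp [hg0]
    have hhb : ∀ z ∈ Metric.ball (0 : ℂ) 1, ‖h z‖ ≤ 1 := by
      intro z hz
      rw [hhdef]
      simp only [norm_div]
      exact div_le_one_of_le₀ (mobius_norm_ineq (hgb z hz) hone) (norm_nonneg _)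
    -- derivative of h at 0
    have he0 : (1 : ℂ) - (starRingEnd ℂ) b * b ≠ 0 := by
      intro heq
      have h1 : ‖(starRingEnd ℂ) b * b‖ < 1 := by
        rw [norm_mul, RCLike.norm_conj]
        nlinarith [norm_nonneg b]
      have : (1 : ℂ) = (starRingEnd ℂ) b * b := by linear_combination heq
      rw [← this] at h1; simp at h1
    have hnum : HasDerivAt (fun z => g z - b) (w 2) 0 := hgderiv.sub_const b
    have hden : HasDerivAt (fun z => 1 - (starRingEnd ℂ) b * g z)
        (-((starRingEnd ℂ) b * w 2)) 0 := by
      simpa using ((hgderiv.const_mul ((starRingEnd ℂ) b)).const_sub 1)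
    have hd0 : (fun z => 1 - (starRingEnd ℂ) b * g z) 0 ≠ 0 := by
      simp only [hg0]; exact he0
    have hhderiv : HasDerivAt h ((w 2 * (1 - (starRingEnd ℂ) b * g 0)
        - (g 0 - b) * (-((starRingEnd ℂ) b * w 2))) / (1 - (starRingEnd ℂ) b * g 0) ^ 2) 0 :=
      hnum.div hden hd0
    have hDval : (w 2 * (1 - (starRingEnd ℂ) b * g 0)
        - (g 0 - b) * (-((starRingEnd ℂ) b * w 2))) / (1 - (starRingEnd ℂ) b * g 0) ^ 2
        = w 2 / (1 - (starRingEnd ℂ) b * b) := by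
      rw [hg0]
      field_simp
      ring
    rw [hDval] at hhderiv
    -- Schwarz bound on deriv h 0
    have hderiv_bound : ‖w 2 / (1 - (starRingEnd ℂ) b * b)‖ ≤ 1 := by
      have key : ∀ R : ℝ, 1 < R → ‖w 2 / (1 - (starRingEnd ℂ) b * b)‖ ≤ R := by
        intro R hR
        have hmaps : Set.MapsTo h (Metric.ball (0 : ℂ) 1) (Metric.ball (h 0) R) := by
          intro z hz
          rw [hh0]
          simp only [Metric.mem_ball, dist_zero_right]
          exact lt_of_le_of_lt (hhb z hz) hR
        have := Complex.norm_deriv_le_div_of_mapsTo_ball hhd (hmaps.mono_right Metric.ball_subset_closedBall) one_pos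
        rwa [hhderiv.deriv, div_one] at this
      exact le_of_forall_gt_imp_ge_of_dense key
    have hbb : (1 : ℂ) - (starRingEnd ℂ) b * b = ((1 - ‖b‖ ^ 2 : ℝ) : ℂ) := by
      have : (starRingEnd ℂ) b * b = ((‖b‖ ^ 2 : ℝ) : ℂ) := by
        rw [mul_comm, Complex.mul_conj]
        norm_cast
        rw [Complex.normSq_eq_norm_sq]
      rw [this]; push_cast; ring
    rw [norm_div, hbb, Complex.norm_real, Real.norm_eq_abs,
      abs_of_pos (by nlinarith [norm_nonneg b, hone] : (0:ℝ) < 1 - ‖b‖ ^ 2), div_le_one (by nlinarith [norm_nonneg b, hone])] at hderiv_bound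
    exact hderiv_bound
  · -- ‖w 1‖ = 1 : maximum modulus forces g constant, so w 2 = 0
    have h1 : ‖w 1‖ = 1 := le_antisymm hw1 (not_lt.mp hone)
    have hmax : IsMaxOn (norm ∘ g) (Metric.ball (0 : ℂ) 1) 0 := by
      intro x hx
      simp only [Function.comp_apply, hg0, h1]
      exact hgb x hx
    have heq := Complex.eqOn_of_isPreconnected_of_isMaxOn_norm
      (convex_ball (0 : ℂ) 1).isPreconnected Metric.isOpen_ball hgd h0ball hmax
    have hev : g =ᶠ[nhds (0 : ℂ)] fun _ => g 0 :=
      Filter.eventuallyEq_of_mem (Metric.isOpen_ball.mem_nhds h0ball) heq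
    have hd0 : deriv g 0 = 0 := by
      rw [hev.deriv_eq]; simp
    rw [hgderiv.deriv] at hd0
    rw [hd0, h1]
    simp


/-- the Fekete–Szegő inequalities for `ST_hpl(s)`, stated (as sanctioned by
the context) via a Schwarz function `ω` with coefficients `w` and
`a₂ = s w₁`, `a₃ = (s/2)(w₂ + ((3s+1)/2) w₁²)`. -/
theorem stmt_9 (s lam : ℝ) (hs0 : 0 < s) (hs1 : s ≤ 1)
    (ω : ℂ → ℂ) (w a : ℕ → ℂ) (hw0 : w 0 = 0)
    (hsum : ∀ z ∈ Metric.ball (0 : ℂ) 1, Summable fun n => w n * z ^ n)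
    (hrep : ∀ z ∈ Metric.ball (0 : ℂ) 1, ω z = ∑' n, w n * z ^ n)
    (hb : ∀ z ∈ Metric.ball (0 : ℂ) 1, ‖ω z‖ < 1)
    (ha2 : a 2 = (s : ℂ) * w 1)
    (ha3 : a 3 = ((s : ℂ) / 2) * (w 2 + ((3 * (s : ℂ) + 1) / 2) * w 1 ^ 2)) :
    ((3 * s + 3) / (4 * s) ≤ lam →
      ‖a 3 - (lam : ℂ) * a 2 ^ 2‖ ≤ s ^ 2 * (lam - (3 * s + 1) / (4 * s))) ∧
    ((3 * s - 1) / (4 * s) ≤ lam ∧ lam ≤ (3 * s + 3) / (4 * s) →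
      ‖a 3 - (lam : ℂ) * a 2 ^ 2‖ ≤ s / 2) ∧
    (lam ≤ (3 * s - 1) / (4 * s) →
      ‖a 3 - (lam : ℂ) * a 2 ^ 2‖ ≤ -(s ^ 2 * (lam - (3 * s + 1) / (4 * s)))) := by
  obtain ⟨hw1, hw2⟩ := schwarz_coeffs ω w hw0 hsum hrep hb
  set μ : ℝ := 2 * lam * s - (3 * s + 1) / 2 with hμ
  have key : a 3 - (lam : ℂ) * a 2 ^ 2 = ((s / 2 : ℝ) : ℂ) * (w 2 - (μ : ℂ) * w 1 ^ 2) := by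
    rw [ha2, ha3, hμ]
    push_cast
    ring
  set t : ℝ := ‖w 1‖ ^ 2 with ht
  have ht0 : 0 ≤ t := by positivity
  have ht1 : t ≤ 1 := by nlinarith [norm_nonneg (w 1)]
  have hw2' : ‖w 2‖ ≤ 1 - t := hw2
  have hnorm : ‖a 3 - (lam : ℂ) * a 2 ^ 2‖ ≤ s / 2 * (‖w 2‖ + |μ| * t) := by
    rw [key, norm_mul, Complex.norm_real, Real.norm_eq_abs, abs_of_pos (by positivity)]
    apply mul_le_mul_of_nonneg_left _ (by positivity)
    calc ‖w 2 - (μ : ℂ) * w 1 ^ 2‖ ≤ ‖w 2‖ + ‖(μ : ℂ) * w 1 ^ 2‖ := norm_sub_le _ _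
      _ = ‖w 2‖ + |μ| * t := by
          rw [norm_mul, norm_pow, Complex.norm_real, Real.norm_eq_abs, ht]
  refine ⟨fun hlam => ?_, fun ⟨hlam1, hlam2⟩ => ?_, fun hlam => ?_⟩
  · have h4s : 3 * s + 3 ≤ lam * (4 * s) := (div_le_iff₀ (by positivity)).mp hlam
    have hμ1 : 1 ≤ μ := by rw [hμ]; nlinarith
    have hRHS : s ^ 2 * (lam - (3 * s + 1) / (4 * s)) = s / 2 * μ := by
      field_simp [hμ]
      ring
    rw [hRHS]
    refine le_trans hnorm (mul_le_mul_of_nonneg_left ?_ (by positivity))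
    rw [abs_of_pos (by linarith)]
    nlinarith
  · have h4s1 : 3 * s - 1 ≤ lam * (4 * s) := (div_le_iff₀ (by positivity)).mp hlam1
    have h4s2 : lam * (4 * s) ≤ 3 * s + 3 := (le_div_iff₀ (by positivity)).mp hlam2
    have hμa : |μ| ≤ 1 := by rw [abs_le, hμ]; constructor <;> nlinarith
    calc ‖a 3 - (lam : ℂ) * a 2 ^ 2‖ ≤ s / 2 * (‖w 2‖ + |μ| * t) := hnorm
      _ ≤ s / 2 * 1 := by
          apply mul_le_mul_of_nonneg_left _ (by positivity)
          nlinarith [abs_nonneg μ]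
      _ = s / 2 := mul_one _
  · have h4s : lam * (4 * s) ≤ 3 * s - 1 := (le_div_iff₀ (by positivity)).mp hlam
    have hμ1 : μ ≤ -1 := by rw [hμ]; nlinarith
    have hRHS : -(s ^ 2 * (lam - (3 * s + 1) / (4 * s))) = s / 2 * (-μ) := by
      field_simp [hμ]
      ring
    rw [hRHS]
    refine le_trans hnorm (mul_le_mul_of_nonneg_left ?_ (by positivity))
    rw [abs_of_neg (by linarith)]
    nlinarith
end
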